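/- Consider an N-player game in which each action set A^i = [a_i, b_i] ⊂ ℝ is a compact interval with a_i < b_i and each utility u^i : ∏_{j=1}^N A^j → ℝ satisfies |u^i| ≤ M and is such that for every a^{-i}, the map a^i ↦ u^i(a^i, a^{-i}) is Lipschitz with constant K. Fix η > 0. Suppose π = (π^1, ..., π^N) is a logit equilibrium: for every i, π^i is the Borel probability measure on A^i whose Lebesgue density is the logit density of U^i, where U^i(x) = ∫ u^i(x, a^{-i}) dπ^{-i}(a^{-i}) and π^{-i} = ⊗_{j≠i} π^j. Then each π^i is absolutely continuous with a density p^i satisfying e^{-2M/η}/(b_i − a_i) ≤ p^i(x) ≤ e^{2M/η}/(b_i − a_i) for all x ∈ A^i, and p^i is Lipschitz with constant (K/η)·e^{2M/η}/(b_i − a_i); in particular every logit equilibrium strategy is a nonatomic, absolutely continuous probability measure. -/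

import Mathlib

open MeasureTheory Set

/-- The logit density with noise level `η` of a payoff function `u` on the
compact interval `A = [a, b]`:  `l(x) = exp(u(x)/η) / ∫_A exp(u(y)/η) dy`. -/
noncomputable def logitDensity (a b η : ℝ) (u : ℝ → ℝ) (x : ℝ) : ℝ :=
  Real.exp (u x / η) / ∫ y in Icc a b, Real.exp (u y / η)


lemma exp_abs_sub_le' {s t C : ℝ} (hs : s ≤ C) (ht : t ≤ C) :
    |Real.exp s - Real.exp t| ≤ Real.exp C * |s - t| := by
  wlog h : t ≤ s generalizing s t
  · rw [abs_sub_comm, abs_sub_comm s t]; exact this ht hs (le_of_not_ge h)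
  rw [abs_of_nonneg (sub_nonneg.mpr (Real.exp_le_exp.mpr h)),
    abs_of_nonneg (sub_nonneg.mpr h)]
  have h1 : t - s + 1 ≤ Real.exp (t - s) := Real.add_one_le_exp _
  have h2 : Real.exp t = Real.exp s * Real.exp (t - s) := by
    rw [← Real.exp_add]; ring_nf
  have h3 : Real.exp s ≤ Real.exp C := Real.exp_le_exp.mpr hs
  nlinarith [Real.exp_pos s, mul_nonneg (sub_nonneg.mpr h3) (sub_nonneg.mpr h)]


/-- In an `N`-player game with compact interval action sets `A^i = [lo i, hi i]`
(`lo i < hi i`), utilities bounded by `M` and `K`-Lipschitz in a player's own action,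
every strategy `π^i` of a logit equilibrium `π = (π^1, …, π^N)` with noise level
`η > 0` (i.e. each `π^i` has Lebesgue density on `A^i` equal to the logit density
of `U^i(x) = ∫ u^i(x, a^{-i}) dπ^{-i}(a^{-i})`, the i-th coordinate of the product
measure being overwritten via `Function.update`) is absolutely continuous with a
density `p^i` satisfying `e^{-2M/η}/(hi i - lo i) ≤ p^i ≤ e^{2M/η}/(hi i - lo i)`
on `A^i` and Lipschitz there with constant `(K/η)·e^{2M/η}/(hi i - lo i)`; in
particular every logit equilibrium strategy is a nonatomic, absolutely continuous
probability measure. -/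
theorem stmt_19 {N : ℕ} (lo hi : Fin N → ℝ) (hab : ∀ i, lo i < hi i)
    (u : Fin N → (Fin N → ℝ) → ℝ) (M K η : ℝ) (hη : 0 < η)
    (humeas : ∀ i, Measurable (u i))
    (hbd : ∀ i, ∀ c : Fin N → ℝ, (∀ j, c j ∈ Icc (lo j) (hi j)) → |u i c| ≤ M)
    (hlip : ∀ i, ∀ c : Fin N → ℝ, (∀ j, c j ∈ Icc (lo j) (hi j)) →
      ∀ x ∈ Icc (lo i) (hi i), ∀ y ∈ Icc (lo i) (hi i),
        |u i (Function.update c i x) - u i (Function.update c i y)| ≤ K * |x - y|)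
    (π : Fin N → Measure ℝ) [∀ i, IsProbabilityMeasure (π i)]
    (hsupp : ∀ i, π i (Icc (lo i) (hi i)) = 1)
    (heq : ∀ i, π i =
      (volume.restrict (Icc (lo i) (hi i))).withDensity fun x =>
        ENNReal.ofReal
          (logitDensity (lo i) (hi i) η
            (fun z => ∫ c, u i (Function.update c i z) ∂(Measure.pi π)) x)) :
    ∀ i, ∃ p : ℝ → ℝ,
      (π i = (volume.restrict (Icc (lo i) (hi i))).withDensity fun x =>
        ENNReal.ofReal (p x)) ∧
      (∀ x ∈ Icc (lo i) (hi i),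
        Real.exp (-(2 * M) / η) / (hi i - lo i) ≤ p x ∧
          p x ≤ Real.exp (2 * M / η) / (hi i - lo i)) ∧
      (∀ x ∈ Icc (lo i) (hi i), ∀ y ∈ Icc (lo i) (hi i),
        |p x - p y| ≤ K / η * Real.exp (2 * M / η) / (hi i - lo i) * |x - y|) ∧
      π i ≪ volume ∧ ∀ x : ℝ, π i {x} = 0 := by
  intro i
  have hab' : lo i < hi i := hab i
  have hba : 0 < hi i - lo i := sub_pos.mpr hab'
  set μ := Measure.pi π with hμdef
  have hμprob : IsProbabilityMeasure μ := by infer_instance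
  set U : ℝ → ℝ := fun z => ∫ c, u i (Function.update c i z) ∂μ with hUdef
  -- basic nonnegativity of constants
  have hloIcc : ∀ j, lo j ∈ Icc (lo j) (hi j) := fun j => ⟨le_rfl, (hab j).le⟩
  have hM : 0 ≤ M := le_trans (abs_nonneg _) (hbd i _ hloIcc)
  have hK : 0 ≤ K := by
    have h := hlip i (fun j => lo j) hloIcc (lo i) ⟨le_rfl, hab'.le⟩ (hi i)
      ⟨hab'.le, le_rfl⟩
    have habs : 0 < |lo i - hi i| := abs_pos.mpr (by linarith)
    nlinarith [abs_nonneg (u i (Function.update (fun j => lo j) i (lo i)) -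
      u i (Function.update (fun j => lo j) i (hi i)))]
  -- a.e. membership in the product box
  have hSmeas : MeasurableSet (Set.pi (univ : Set (Fin N)) fun j => Icc (lo j) (hi j)) :=
    MeasurableSet.univ_pi fun j => measurableSet_Icc
  have hSone : μ (Set.pi univ fun j => Icc (lo j) (hi j)) = 1 := by
    rw [hμdef, Measure.pi_pi]
    simp [hsupp]
  have hae : ∀ᵐ c ∂μ, ∀ j, c j ∈ Icc (lo j) (hi j) := by
    have h0 : μ (Set.pi univ fun j => Icc (lo j) (hi j))ᶜ = 0 := by
      rw [measure_compl hSmeas (measure_ne_top _ _), hSone, measure_univ, tsub_self]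
    have hmem : ∀ᵐ c ∂μ, c ∈ Set.pi univ fun j => Icc (lo j) (hi j) :=
      ae_iff.mpr h0
    filter_upwards [hmem] with c hc j
    exact hc j (mem_univ j)
  -- measurability of the update map
  have hupd : ∀ z : ℝ, Measurable fun c : Fin N → ℝ => Function.update c i z := by
    intro z
    apply measurable_pi_lambda
    intro j
    rcases eq_or_ne j i with rfl | h
    · simp only [Function.update_self]
      exact measurable_const
    · simp only [Function.update_of_ne h]
      exact measurable_pi_apply j
  have hmemupd : ∀ (c : Fin N → ℝ), (∀ j, c j ∈ Icc (lo j) (hi j)) →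
      ∀ z ∈ Icc (lo i) (hi i), ∀ j, Function.update c i z j ∈ Icc (lo j) (hi j) := by
    intro c hc z hz j
    rcases eq_or_ne j i with rfl | h
    · simpa [Function.update_self] using hz
    · simpa [Function.update_of_ne h] using hc j
  -- integrability
  have hint : ∀ z ∈ Icc (lo i) (hi i),
      Integrable (fun c => u i (Function.update c i z)) μ := by
    intro z hz
    refine Integrable.mono' (integrable_const M)
      (((humeas i).comp (hupd z)).aestronglyMeasurable) ?_
    filter_upwards [hae] with c hc
    rw [Real.norm_eq_abs]
    exact hbd i _ (hmemupd c hc z hz)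
  -- bound on U
  have hUbd : ∀ z ∈ Icc (lo i) (hi i), |U z| ≤ M := by
    intro z hz
    rw [hUdef]
    have := norm_integral_le_of_norm_le_const (μ := μ)
      (f := fun c => u i (Function.update c i z)) (C := M)
      (by filter_upwards [hae] with c hc; rw [Real.norm_eq_abs];
          exact hbd i _ (hmemupd c hc z hz))
    simpa [Real.norm_eq_abs, measure_univ] using this
  -- Lipschitz of U on the interval
  have hUlip : ∀ x ∈ Icc (lo i) (hi i), ∀ y ∈ Icc (lo i) (hi i),
      |U x - U y| ≤ K * |x - y| := by
    intro x hx y hy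
    rw [hUdef]
    simp only
    rw [← integral_sub (hint x hx) (hint y hy)]
    have := norm_integral_le_of_norm_le_const (μ := μ)
      (f := fun c => u i (Function.update c i x) - u i (Function.update c i y))
      (C := K * |x - y|)
      (by filter_upwards [hae] with c hc; rw [Real.norm_eq_abs];
          exact hlip i c hc x hx y hy)
    simpa [Real.norm_eq_abs, measure_univ] using this
  -- continuity of the exponential weight on the interval
  have hUcont : ContinuousOn U (Icc (lo i) (hi i)) := by
    apply LipschitzOnWith.continuousOn (K := Real.toNNReal K)
    apply LipschitzOnWith.of_dist_le_mul
    intro x hx y hy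
    rw [Real.dist_eq, Real.dist_eq]
    calc |U x - U y| ≤ K * |x - y| := hUlip x hx y hy
      _ = Real.toNNReal K * |x - y| := by rw [Real.coe_toNNReal K hK]
  have hφcont : ContinuousOn (fun y => Real.exp (U y / η)) (Icc (lo i) (hi i)) :=
    Real.continuous_exp.comp_continuousOn (hUcont.div_const η)
  have hφint : IntegrableOn (fun y => Real.exp (U y / η)) (Icc (lo i) (hi i)) volume :=
    hφcont.integrableOn_compact isCompact_Icc
  set D : ℝ := ∫ y in Icc (lo i) (hi i), Real.exp (U y / η) with hDdef
  -- pointwise bounds on the exponential weight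
  have hexp_lb : ∀ z ∈ Icc (lo i) (hi i), Real.exp (-(M / η)) ≤ Real.exp (U z / η) := by
    intro z hz
    apply Real.exp_le_exp.mpr
    have h2 := (abs_le.mp (hUbd z hz)).1
    rw [← neg_div]
    gcongr
  have hexp_ub : ∀ z ∈ Icc (lo i) (hi i), Real.exp (U z / η) ≤ Real.exp (M / η) := by
    intro z hz
    apply Real.exp_le_exp.mpr
    have h2 := (abs_le.mp (hUbd z hz)).2
    gcongr
  -- bounds on the normalizing constant D
  have hIccvol : (volume (Icc (lo i) (hi i))).toReal = hi i - lo i := by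
    rw [Real.volume_Icc, ENNReal.toReal_ofReal hba.le]
  have hDlow : (hi i - lo i) * Real.exp (-(M / η)) ≤ D := by
    have := setIntegral_mono_on (integrableOn_const (by
      rw [Real.volume_Icc]; exact ENNReal.ofReal_ne_top)) hφint measurableSet_Icc
      hexp_lb
    rwa [setIntegral_const, measureReal_def, hIccvol, smul_eq_mul] at this
  have hDhigh : D ≤ (hi i - lo i) * Real.exp (M / η) := by
    have := setIntegral_mono_on hφint (integrableOn_const (by
      rw [Real.volume_Icc]; exact ENNReal.ofReal_ne_top)) measurableSet_Icc
      hexp_ub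
    rwa [setIntegral_const, measureReal_def, hIccvol, smul_eq_mul] at this
  have hD0 : 0 < D := lt_of_lt_of_le (by positivity) hDlow
  -- the density
  have hpval : ∀ x, logitDensity (lo i) (hi i) η U x = Real.exp (U x / η) / D := by
    intro x; rfl
  have hac : π i ≪ volume := by
    rw [heq i]
    exact (withDensity_absolutelyContinuous _ _).trans
      (Measure.restrict_le_self.absolutelyContinuous)
  refine ⟨logitDensity (lo i) (hi i) η U, heq i, ?_, ?_, hac, fun x => hac (measure_singleton x)⟩
  · -- pointwise bounds
    intro x hx
    rw [hpval]
    have e1 : Real.exp (-(2 * M) / η) * Real.exp (M / η) = Real.exp (-(M / η)) := by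
      rw [← Real.exp_add]; congr 1; field_simp; ring
    have e2 : Real.exp (2 * M / η) * Real.exp (-(M / η)) = Real.exp (M / η) := by
      rw [← Real.exp_add]; congr 1; field_simp; ring
    constructor
    · rw [div_le_div_iff₀ hba hD0]
      nlinarith [hexp_lb x hx, hDhigh, Real.exp_pos (-(2 * M) / η),
        Real.exp_pos (M / η), Real.exp_pos (-(M / η)), Real.exp_pos (U x / η)]
    · rw [div_le_div_iff₀ hD0 hba]
      nlinarith [hexp_ub x hx, hDlow, Real.exp_pos (2 * M / η),
        Real.exp_pos (M / η), Real.exp_pos (-(M / η)), Real.exp_pos (U x / η)]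
  · -- Lipschitz bound
    intro x hx y hy
    rw [hpval, hpval, div_sub_div_same, abs_div, abs_of_pos hD0]
    have hxb : U x / η ≤ M / η := by
      have := (abs_le.mp (hUbd x hx)).2; gcongr
    have hyb : U y / η ≤ M / η := by
      have := (abs_le.mp (hUbd y hy)).2; gcongr
    have h1 : |Real.exp (U x / η) - Real.exp (U y / η)| ≤
        Real.exp (M / η) * (K * |x - y| / η) := by
      calc |Real.exp (U x / η) - Real.exp (U y / η)|
          ≤ Real.exp (M / η) * |U x / η - U y / η| := exp_abs_sub_le' hxb hyb
        _ = Real.exp (M / η) * (|U x - U y| / η) := by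
            rw [div_sub_div_same, abs_div, abs_of_pos hη]
        _ ≤ Real.exp (M / η) * (K * |x - y| / η) := by
            gcongr
            exact hUlip x hx y hy
    calc |Real.exp (U x / η) - Real.exp (U y / η)| / D
        ≤ Real.exp (M / η) * (K * |x - y| / η) / D := by gcongr
      _ ≤ Real.exp (M / η) * (K * |x - y| / η) / ((hi i - lo i) * Real.exp (-(M / η))) := by
          gcongr
      _ = K / η * Real.exp (2 * M / η) / (hi i - lo i) * |x - y| := by
          rw [show Real.exp (2 * M / η) = Real.exp (M / η) * Real.exp (M / η) from by
            rw [← Real.exp_add]; congr 1; ring, Real.exp_neg]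
          field_simp
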